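/- For every matrix A in the 11-dimensional complex span L of the two-qubit Jordan–Wigner operators, their quadratic products, and the identity, the matrix exponential exp(A) is an invertible 2-input 2-output matchgate, i.e. exp(A) satisfies all ten matchgate identities. -/

import Mathlib

noncomputable section

open Complex

/-- The ten matchgate identities for a 4×4 complex matrix `B`
(rows/columns indexed `0,1,2,3` corresponding to `1,2,3,4`). -/
def IsMatchgate (B : Matrix (Fin 4) (Fin 4) ℂ) : Prop :=
  B 0 0 * B 3 3 - B 0 3 * B 3 0 - B 1 1 * B 2 2 + B 1 2 * B 2 1 = 0 ∧
  B 1 0 * B 3 3 - B 1 1 * B 3 2 + B 1 2 * B 3 1 - B 1 3 * B 3 0 = 0 ∧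
  B 2 0 * B 3 3 - B 2 1 * B 3 2 + B 2 2 * B 3 1 - B 2 3 * B 3 0 = 0 ∧
  B 0 2 * B 3 3 - B 0 3 * B 3 2 - B 1 2 * B 2 3 + B 1 3 * B 2 2 = 0 ∧
  B 0 1 * B 3 3 - B 0 3 * B 3 1 - B 1 1 * B 2 3 + B 1 3 * B 2 1 = 0 ∧
  B 0 0 * B 1 3 - B 0 1 * B 1 2 + B 0 2 * B 1 1 - B 0 3 * B 1 0 = 0 ∧
  B 0 0 * B 3 1 - B 0 1 * B 3 0 - B 1 0 * B 2 1 + B 1 1 * B 2 0 = 0 ∧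
  B 0 1 * B 3 2 - B 0 2 * B 3 1 - B 1 0 * B 2 3 + B 1 3 * B 2 0 = 0 ∧
  B 0 0 * B 2 3 - B 0 1 * B 2 2 + B 0 2 * B 2 1 - B 0 3 * B 2 0 = 0 ∧
  B 0 0 * B 3 2 - B 0 2 * B 3 0 - B 1 0 * B 2 2 + B 1 2 * B 2 0 = 0

/- The eleven two-qubit operators (written as explicit 4×4 matrices in the basis
`00,01,10,11` ↔ `1,2,3,4`): the identity `I⊗I`, the (reversed) Jordan–Wigner
operators `I⊗X, I⊗Y, X⊗Z, Y⊗Z`, and their quadratic products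
`I⊗Z, X⊗Y, Y⊗Y, X⊗X, Y⊗X, Z⊗I`. -/

def mII : Matrix (Fin 4) (Fin 4) ℂ := 1
def mIX : Matrix (Fin 4) (Fin 4) ℂ := !![0,1,0,0; 1,0,0,0; 0,0,0,1; 0,0,1,0]
def mIY : Matrix (Fin 4) (Fin 4) ℂ := !![0,-I,0,0; I,0,0,0; 0,0,0,-I; 0,0,I,0]
def mXZ : Matrix (Fin 4) (Fin 4) ℂ := !![0,0,1,0; 0,0,0,-1; 1,0,0,0; 0,-1,0,0]
def mYZ : Matrix (Fin 4) (Fin 4) ℂ := !![0,0,-I,0; 0,0,0,I; I,0,0,0; 0,-I,0,0]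
def mIZ : Matrix (Fin 4) (Fin 4) ℂ := !![1,0,0,0; 0,-1,0,0; 0,0,1,0; 0,0,0,-1]
def mXY : Matrix (Fin 4) (Fin 4) ℂ := !![0,0,0,-I; 0,0,I,0; 0,-I,0,0; I,0,0,0]
def mYY : Matrix (Fin 4) (Fin 4) ℂ := !![0,0,0,-1; 0,0,1,0; 0,1,0,0; -1,0,0,0]
def mXX : Matrix (Fin 4) (Fin 4) ℂ := !![0,0,0,1; 0,0,1,0; 0,1,0,0; 1,0,0,0]
def mYX : Matrix (Fin 4) (Fin 4) ℂ := !![0,0,0,-I; 0,0,-I,0; 0,I,0,0; I,0,0,0]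
def mZI : Matrix (Fin 4) (Fin 4) ℂ := !![1,0,0,0; 0,1,0,0; 0,0,-1,0; 0,0,0,-1]

/-- The 11-dimensional span `L` of the two-qubit Jordan–Wigner operators, their
quadratic products and the identity. -/
def LJW : Submodule ℂ (Matrix (Fin 4) (Fin 4) ℂ) :=
  Submodule.span ℂ {mII, mIX, mIY, mXZ, mYZ, mIZ, mXY, mYY, mXX, mYX, mZI}

open scoped Matrix

/-- The matrix of the antisymmetric bilinear form underlying the matchgate identities. -/
def Jm : Matrix (Fin 4) (Fin 4) ℂ := !![0,0,0,1; 0,0,-1,0; 0,1,0,0; -1,0,0,0]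

lemma Jm_mul_Jm : Jm * Jm = -1 := by
  ext i j
  fin_cases i <;> fin_cases j <;>
    simp [Jm, Matrix.mul_apply, Fin.sum_univ_four, Matrix.one_apply,
      Matrix.vecHead, Matrix.vecTail]

/-- The submodule of matrices `A` with `A*J + J*Aᵀ ∈ ℂ•J`. -/
def relSet : Submodule ℂ (Matrix (Fin 4) (Fin 4) ℂ) where
  carrier := {A | ∃ c : ℂ, A * Jm + Jm * Aᵀ = c • Jm}
  zero_mem' := ⟨0, by
    rw [Matrix.transpose_zero, Matrix.zero_mul, Matrix.mul_zero, add_zero, zero_smul]⟩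
  add_mem' := by
    rintro a b ⟨c, hc⟩ ⟨d, hd⟩
    exact ⟨c + d, by
      rw [Matrix.transpose_add, add_mul, mul_add, add_smul, ← hc, ← hd]; abel⟩
  smul_mem' := by
    rintro r a ⟨c, hc⟩
    exact ⟨r * c, by
      rw [Matrix.transpose_smul, smul_mul_assoc, Matrix.mul_smul, ← smul_add, hc,
        smul_smul]⟩

lemma mem_relSet {A : Matrix (Fin 4) (Fin 4) ℂ} :
    A ∈ relSet ↔ ∃ c : ℂ, A * Jm + Jm * Aᵀ = c • Jm := Iff.rfl

lemma rel_mIX : mIX * Jm + Jm * mIXᵀ = (0:ℂ) • Jm := by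
  ext i j
  fin_cases i <;> fin_cases j <;>
    simp [mIX, Jm, Matrix.mul_apply, Fin.sum_univ_four, Matrix.vecHead, Matrix.vecTail,
      Matrix.vecMul, dotProduct]

lemma rel_mIY : mIY * Jm + Jm * mIYᵀ = (0:ℂ) • Jm := by
  ext i j
  fin_cases i <;> fin_cases j <;>
    simp [mIY, Jm, Matrix.mul_apply, Fin.sum_univ_four, Matrix.vecHead, Matrix.vecTail,
      Matrix.vecMul, dotProduct]

lemma rel_mXZ : mXZ * Jm + Jm * mXZᵀ = (0:ℂ) • Jm := by
  ext i j
  fin_cases i <;> fin_cases j <;>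
    simp [mXZ, Jm, Matrix.mul_apply, Fin.sum_univ_four, Matrix.vecHead, Matrix.vecTail,
      Matrix.vecMul, dotProduct]

lemma rel_mYZ : mYZ * Jm + Jm * mYZᵀ = (0:ℂ) • Jm := by
  ext i j
  fin_cases i <;> fin_cases j <;>
    simp [mYZ, Jm, Matrix.mul_apply, Fin.sum_univ_four, Matrix.vecHead, Matrix.vecTail,
      Matrix.vecMul, dotProduct]

lemma rel_mIZ : mIZ * Jm + Jm * mIZᵀ = (0:ℂ) • Jm := by
  ext i j
  fin_cases i <;> fin_cases j <;>
    simp [mIZ, Jm, Matrix.mul_apply, Fin.sum_univ_four, Matrix.vecHead, Matrix.vecTail,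
      Matrix.vecMul, dotProduct]

lemma rel_mXY : mXY * Jm + Jm * mXYᵀ = (0:ℂ) • Jm := by
  ext i j
  fin_cases i <;> fin_cases j <;>
    simp [mXY, Jm, Matrix.mul_apply, Fin.sum_univ_four, Matrix.vecHead, Matrix.vecTail,
      Matrix.vecMul, dotProduct]

lemma rel_mYY : mYY * Jm + Jm * mYYᵀ = (0:ℂ) • Jm := by
  ext i j
  fin_cases i <;> fin_cases j <;>
    simp [mYY, Jm, Matrix.mul_apply, Fin.sum_univ_four, Matrix.vecHead, Matrix.vecTail,
      Matrix.vecMul, dotProduct]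

lemma rel_mXX : mXX * Jm + Jm * mXXᵀ = (0:ℂ) • Jm := by
  ext i j
  fin_cases i <;> fin_cases j <;>
    simp [mXX, Jm, Matrix.mul_apply, Fin.sum_univ_four, Matrix.vecHead, Matrix.vecTail,
      Matrix.vecMul, dotProduct]

lemma rel_mYX : mYX * Jm + Jm * mYXᵀ = (0:ℂ) • Jm := by
  ext i j
  fin_cases i <;> fin_cases j <;>
    simp [mYX, Jm, Matrix.mul_apply, Fin.sum_univ_four, Matrix.vecHead, Matrix.vecTail,
      Matrix.vecMul, dotProduct]

lemma rel_mZI : mZI * Jm + Jm * mZIᵀ = (0:ℂ) • Jm := by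
  ext i j
  fin_cases i <;> fin_cases j <;>
    simp [mZI, Jm, Matrix.mul_apply, Fin.sum_univ_four, Matrix.vecHead, Matrix.vecTail,
      Matrix.vecMul, dotProduct]

lemma LJW_le_relSet : LJW ≤ relSet := by
  rw [LJW, Submodule.span_le]
  intro M hM
  simp only [Set.mem_insert_iff, Set.mem_singleton_iff] at hM
  rcases hM with rfl | rfl | rfl | rfl | rfl | rfl | rfl | rfl | rfl | rfl | rfl <;>
    rw [SetLike.mem_coe, mem_relSet]
  · exact ⟨2, by rw [mII, Matrix.transpose_one, one_mul, mul_one, two_smul]⟩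
  · exact ⟨0, rel_mIX⟩
  · exact ⟨0, rel_mIY⟩
  · exact ⟨0, rel_mXZ⟩
  · exact ⟨0, rel_mYZ⟩
  · exact ⟨0, rel_mIZ⟩
  · exact ⟨0, rel_mXY⟩
  · exact ⟨0, rel_mYY⟩
  · exact ⟨0, rel_mXX⟩
  · exact ⟨0, rel_mYX⟩
  · exact ⟨0, rel_mZI⟩

lemma assemble (B E : Matrix (Fin 4) (Fin 4) ℂ) (e : ℂ)
    (hBt : Bᵀ = Jm * E * (-Jm)) (hBE : B * E = e • 1) (hEB : E * B = e • 1) :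
    B * Jm * Bᵀ = e • Jm ∧ Bᵀ * Jm * B = e • Jm := by
  constructor
  · calc B * Jm * Bᵀ = B * (Jm * Jm) * (E * (-Jm)) := by rw [hBt]; noncomm_ring
      _ = B * E * Jm := by rw [Jm_mul_Jm]; noncomm_ring
      _ = e • Jm := by rw [hBE, smul_mul_assoc, one_mul]
  · calc Bᵀ * Jm * B = Jm * E * (-(Jm * Jm)) * B := by rw [hBt]; noncomm_ring
      _ = Jm * (E * B) := by rw [Jm_mul_Jm]; noncomm_ring
      _ = e • Jm := by rw [hEB, Matrix.mul_smul, mul_one]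

theorem exp_of_JW_span_isMatchgate (A : Matrix (Fin 4) (Fin 4) ℂ) (hA : A ∈ LJW) :
    IsMatchgate (NormedSpace.exp A) ∧ IsUnit (NormedSpace.exp A) := by
  obtain ⟨c, hc⟩ := mem_relSet.mp (LJW_le_relSet hA)
  refine ⟨?_, Matrix.isUnit_exp A⟩
  -- the unit with value `Jm` and inverse `-Jm`
  have hJJ' : Jm * -Jm = 1 := by rw [mul_neg, Jm_mul_Jm, neg_neg]
  have hJJ'' : -Jm * Jm = 1 := by rw [neg_mul, Jm_mul_Jm, neg_neg]
  set U : (Matrix (Fin 4) (Fin 4) ℂ)ˣ := ⟨Jm, -Jm, hJJ', hJJ''⟩ with hU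
  -- transpose of `A` as a conjugate
  have hAt : Aᵀ = Jm * (c • 1 - A) * (-Jm) := by
    have h2 : Jm * Aᵀ = c • Jm - A * Jm := eq_sub_of_add_eq' hc
    have h3 : (-Jm) * (Jm * Aᵀ) = (-Jm) * (c • Jm - A * Jm) := by rw [h2]
    rw [← mul_assoc, neg_mul, Jm_mul_Jm, neg_neg, one_mul] at h3
    rw [h3]
    simp only [mul_sub, sub_mul, Matrix.mul_smul, smul_mul_assoc, neg_mul, mul_neg,
      neg_neg, neg_sub, Jm_mul_Jm, smul_neg, mul_assoc, mul_one, one_mul]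
    abel
  set B := NormedSpace.exp A with hB
  set E := NormedSpace.exp (c • 1 - A) with hE
  have hcomm : Commute (c • (1 : Matrix (Fin 4) (Fin 4) ℂ) - A) A :=
    (((Commute.one_left A).smul_left c).sub_left (Commute.refl A))
  have hscalar : NormedSpace.exp (c • (1 : Matrix (Fin 4) (Fin 4) ℂ)) =
      Complex.exp c • 1 := by
    have h1 : c • (1 : Matrix (Fin 4) (Fin 4) ℂ) = Matrix.diagonal (fun _ => c) := by
      ext i j
      by_cases h : i = j <;> simp [Matrix.diagonal_apply, Matrix.one_apply, h]
    rw [h1, Matrix.exp_diagonal]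
    ext i j
    by_cases h : i = j <;>
      simp [Matrix.diagonal_apply, Matrix.one_apply, h, Pi.exp_def, Complex.exp_eq_exp_ℂ]
  have hEB : E * B = Complex.exp c • 1 := by
    rw [hE, hB, ← Matrix.exp_add_of_commute _ _ hcomm,
      show (c • 1 - A) + A = c • (1 : Matrix (Fin 4) (Fin 4) ℂ) by abel, hscalar]
  have hBE : B * E = Complex.exp c • 1 := by
    rw [hE, hB, ← Matrix.exp_add_of_commute _ _ hcomm.symm,
      show A + (c • 1 - A) = c • (1 : Matrix (Fin 4) (Fin 4) ℂ) by abel, hscalar]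
  have hBt : Bᵀ = Jm * E * (-Jm) := by
    have hconj : NormedSpace.exp ((U : Matrix (Fin 4) (Fin 4) ℂ) * (c • 1 - A) *
        ((U⁻¹ : (Matrix (Fin 4) (Fin 4) ℂ)ˣ) : Matrix (Fin 4) (Fin 4) ℂ)) =
        (U : Matrix (Fin 4) (Fin 4) ℂ) * E *
        ((U⁻¹ : (Matrix (Fin 4) (Fin 4) ℂ)ˣ) : Matrix (Fin 4) (Fin 4) ℂ) :=
      Matrix.exp_units_conj U _
    have hUval : (U : Matrix (Fin 4) (Fin 4) ℂ) = Jm := rfl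
    have hUinv : ((U⁻¹ : (Matrix (Fin 4) (Fin 4) ℂ)ˣ) : Matrix (Fin 4) (Fin 4) ℂ)
        = -Jm := rfl
    rw [hUval, hUinv] at hconj
    rw [hB, ← Matrix.exp_transpose, hAt, hconj]
  obtain ⟨h1, h2⟩ := assemble B E (Complex.exp c) hBt hBE hEB
  -- extract entries
  have e01 := congrFun (congrFun h1 0) 1
  have e02 := congrFun (congrFun h1 0) 2
  have e13 := congrFun (congrFun h1 1) 3
  have e23 := congrFun (congrFun h1 2) 3
  have e03 := congrFun (congrFun h1 0) 3
  have e12 := congrFun (congrFun h1 1) 2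
  have f01 := congrFun (congrFun h2 0) 1
  have f02 := congrFun (congrFun h2 0) 2
  have f13 := congrFun (congrFun h2 1) 3
  have f23 := congrFun (congrFun h2 2) 3
  have f03 := congrFun (congrFun h2 0) 3
  have f12 := congrFun (congrFun h2 1) 2
  simp [Jm, Matrix.mul_apply, Fin.sum_univ_four, Matrix.vecHead, Matrix.vecTail]
    at e01 e02 e13 e23 e03 e12 f01 f02 f13 f23 f03 f12
  refine ⟨?_, ?_, ?_, ?_, ?_, ?_, ?_, ?_, ?_, ?_⟩
  · linear_combination (e03 + e12 + f03 + f12) / 2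
  · linear_combination e13
  · linear_combination e23
  · linear_combination f23
  · linear_combination f13
  · linear_combination e01
  · linear_combination f01
  · linear_combination (f03 + f12 - e03 - e12) / 2
  · linear_combination e02
  · linear_combination f02
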